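/- Assume that G − {x_1,…,x_m} contains no directed path from v to u for any red arc (u,v) ∈ R. Let Z' ⊆ ⋃_{e ∈ E(G)∖R} B_e be such that H − Z' has no directed path from s to t, and let Z = {e ∈ E(G)∖R : B_e ∩ Z' ≠ ∅}. Then for every red arc (u,v) ∈ R there is no directed path from v to u in G − Z; equivalently, G − Z has no closed directed walk containing a red arc. -/

import Mathlib

/-!
STATEMENT 5: the backward direction of the correctness of the reduction from
Directed Subset Feedback Edge Set to Bundled Cut (see the file for STATEMENT 4
for the description of the construction of `H` and of the bundles `B_e`).

Claim: assume `G − {x 1, …, x m}` contains no path from `v` to `u` for any red arc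
`(u,v) ∈ R`.  If `Z' ⊆ ⋃_{e ∈ E∖R} B_e` is such that `H − Z'` has no path from
`src` to `snk`, and `Z = {e ∈ E∖R : B_e ∩ Z' ≠ ∅}`, then for every red arc
`(u,v) ∈ R` there is no path from `v` to `u` in `G − Z`; equivalently, `G − Z` has
no closed directed walk containing a red arc.
-/


variable {V : Type*}

/-- Directed reachability (existence of a directed path/walk) along arcs of `E`. -/
def dReach (E : Set (V × V)) : V → V → Prop :=
  Relation.ReflTransGen fun a b => (a, b) ∈ E

/-- The vertices of `H`: a source, a sink, and the copies `u^a` of vertices of `G`. -/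
inductive DV (V : Type*) where
  | src : DV V
  | snk : DV V
  | node : V → ℕ → DV V

/-- The arcs of the digraph `H`. -/
inductive DAdj (E R : Set (V × V)) (x : ℕ → V) (m : ℕ) : DV V → DV V → Prop where
  /-- the copy `(u^a, v^a)` of an arc `(u,v) ∈ E`, for `1 ≤ a ≤ 2m+1` -/
  | copy {u v : V} {a : ℕ} : (u, v) ∈ E → 1 ≤ a → a ≤ 2 * m + 1 →
      DAdj E R x m (.node u a) (.node v a)
  /-- the arc `(u^b, u^a)` for `1 ≤ a < b ≤ 2m+1` -/
  | down {u : V} {a b : ℕ} : 1 ≤ a → a < b → b ≤ 2 * m + 1 →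
      DAdj E R x m (.node u b) (.node u a)
  /-- the arc `(u^{2a}, v^{2a+1})` for a red arc `(u,v) ∈ R` and `1 ≤ a ≤ m` -/
  | red {u v : V} {a : ℕ} : (u, v) ∈ R → 1 ≤ a → a ≤ m →
      DAdj E R x m (.node u (2 * a)) (.node v (2 * a + 1))
  /-- the arc `(src, (x a)^b)` for `1 ≤ a ≤ m`, `1 ≤ b ≤ 2m+1`, `2a ≥ b` -/
  | fromS {a b : ℕ} : 1 ≤ a → a ≤ m → 1 ≤ b → b ≤ 2 * m + 1 → b ≤ 2 * a →
      DAdj E R x m .src (.node (x a) b)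
  /-- the arc `((x a)^b, snk)` for `1 ≤ a ≤ m`, `1 ≤ b ≤ 2m+1`, `2a < b` -/
  | toT {a b : ℕ} : 1 ≤ a → a ≤ m → 1 ≤ b → b ≤ 2 * m + 1 → 2 * a < b →
      DAdj E R x m (.node (x a) b) .snk

/-- The union of the bundles `B_e` over `e ∈ Z`: all `2m+1` copies of each arc of `Z`. -/
def bundleUnion (m : ℕ) (Z : Set (V × V)) : Set (DV V × DV V) :=
  {p | ∃ e ∈ Z, ∃ a : ℕ, 1 ≤ a ∧ a ≤ 2 * m + 1 ∧ p = (.node e.1 a, .node e.2 a)}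


/-- A directed walk in the digraph with arc set `E`, encoded as a nonempty list of
vertices in which consecutive vertices are joined by an arc of `E`. -/

lemma chain'_reach {r : V → V → Prop} : ∀ (l : List V), l.Chain' r → ∀ a z : V,
    l.head? = some a → l.getLast? = some z → Relation.ReflTransGen r a z := by
  intro l
  induction l with
  | nil => simp
  | cons xx t ih =>
    intro hc a z ha hz
    simp only [List.head?_cons, Option.some.injEq] at ha
    subst ha
    cases t with
    | nil =>
      simp only [List.getLast?_singleton, Option.some.injEq] at hz
      subst hz; exact .refl
    | cons y t' =>
      have h := List.isChain_cons_cons.mp hc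
      rw [List.getLast?_cons_cons] at hz
      exact Relation.ReflTransGen.head h.1 (ih h.2 y z rfl hz)

lemma split_at_x (E Z : Set (V × V)) (m : ℕ) (x : ℕ → V) {v u : V}
    (h : Relation.ReflTransGen (fun a b => (a, b) ∈ E \ Z) v u) :
    (Relation.ReflTransGen
      (fun a b => (a, b) ∈ E \ Z ∧ (∀ i : ℕ, 1 ≤ i → i ≤ m → a ≠ x i) ∧
        (∀ i : ℕ, 1 ≤ i → i ≤ m → b ≠ x i)) v u)
    ∨ ∃ i, 1 ≤ i ∧ i ≤ m ∧ Relation.ReflTransGen (fun a b => (a, b) ∈ E \ Z) v (x i)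
        ∧ Relation.ReflTransGen (fun a b => (a, b) ∈ E \ Z) (x i) u := by
  induction h with
  | refl => left; exact .refl
  | @tail b u hvb step ih =>
    have hmono : Relation.ReflTransGen
        (fun a b => (a, b) ∈ E \ Z ∧ (∀ i : ℕ, 1 ≤ i → i ≤ m → a ≠ x i) ∧
          (∀ i : ℕ, 1 ≤ i → i ≤ m → b ≠ x i)) v b →
        Relation.ReflTransGen (fun a b => (a, b) ∈ E \ Z) v b :=
      Relation.ReflTransGen.mono (p := fun a b => (a, b) ∈ E \ Z) (fun _ _ h => h.1) v b
    rcases ih with havoid | ⟨i, h1, h2, hv, hb⟩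
    · by_cases hu : ∃ j, 1 ≤ j ∧ j ≤ m ∧ u = x j
      · obtain ⟨j, hj1, hj2, hju⟩ := hu
        right
        exact ⟨j, hj1, hj2, hju ▸ (hmono havoid).tail step, hju ▸ .refl⟩
      · by_cases hb' : ∃ j, 1 ≤ j ∧ j ≤ m ∧ b = x j
        · obtain ⟨j, hj1, hj2, hjb⟩ := hb'
          right
          exact ⟨j, hj1, hj2, hjb ▸ hmono havoid, hjb ▸ Relation.ReflTransGen.single step⟩
        · left
          exact havoid.tail ⟨step,
            fun i hi1 hi2 he => hb' ⟨i, hi1, hi2, he⟩,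
            fun i hi1 hi2 he => hu ⟨i, hi1, hi2, he⟩⟩
    · right; exact ⟨i, h1, h2, hv, hb.tail step⟩


lemma lift_reach (E R : Set (V × V)) (m : ℕ) (x : ℕ → V)
    (Z' : Set (DV V × DV V)) (hZ'sub : Z' ⊆ bundleUnion m (E \ R))
    (Z : Set (V × V))
    (hZ : ∀ e : V × V, e ∈ E \ R → (∃ a : ℕ, 1 ≤ a ∧ a ≤ 2 * m + 1 ∧
      ((.node e.1 a : DV V), (.node e.2 a : DV V)) ∈ Z') → e ∈ Z)
    {p q : V} (h : Relation.ReflTransGen (fun a b => (a, b) ∈ E \ Z) p q)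
    (c : ℕ) (hc1 : 1 ≤ c) (hc2 : c ≤ 2 * m + 1) :
    Relation.ReflTransGen (fun p q => DAdj E R x m p q ∧ (p, q) ∉ Z')
      (DV.node p c) (DV.node q c) := by
  induction h with
  | refl => exact .refl
  | @tail b u _ step ih =>
    refine ih.tail ⟨DAdj.copy step.1 hc1 hc2, fun hmem => step.2 ?_⟩
    by_cases hbR : (b, u) ∈ R
    · exfalso
      obtain ⟨e, heER, a', _, _, heq⟩ := hZ'sub hmem
      rw [Prod.mk.injEq] at heq
      obtain ⟨he1, he2⟩ := heq
      injection he1 with hb ha; injection he2 with hu _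
      exact heER.2 (by rw [show e = (b, u) from Prod.ext hb.symm hu.symm]; exact hbR)
    · exact hZ (b, u) ⟨step.1, hbR⟩ ⟨c, hc1, hc2, hmem⟩


def IsDWalk (E : Set (V × V)) (l : List V) : Prop :=
  l ≠ [] ∧ l.Chain' fun a b => (a, b) ∈ E

theorem stmt_5 [Fintype V] (E R : Set (V × V)) (hR : R ⊆ E)
    (m : ℕ) (x : ℕ → V)
    -- `x 1, …, x m` are pairwise distinct vertices
    (hxdist : ∀ i j : ℕ, 1 ≤ i → i < j → j ≤ m → x i ≠ x j)
    -- `G − {x 1, …, x m}` has no path from `v` to `u` for any red arc `(u,v) ∈ R`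
    (hX : ∀ p ∈ R, ¬ Relation.ReflTransGen
      (fun a b => (a, b) ∈ E ∧ (∀ i : ℕ, 1 ≤ i → i ≤ m → a ≠ x i) ∧
        (∀ i : ℕ, 1 ≤ i → i ≤ m → b ≠ x i)) p.2 p.1)
    -- `Z'` is contained in the union of the bundles `B_e` over `e ∈ E ∖ R`
    (Z' : Set (DV V × DV V)) (hZ'sub : Z' ⊆ bundleUnion m (E \ R))
    -- `H − Z'` has no directed path from `src` to `snk`
    (hcut : ¬ Relation.ReflTransGen
      (fun p q => DAdj E R x m p q ∧ (p, q) ∉ Z') DV.src DV.snk)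
    -- `Z` consists of the arcs of `E ∖ R` having a copy in `Z'`
    (Z : Set (V × V))
    (hZdef : Z = {e ∈ E \ R | ∃ a : ℕ, 1 ≤ a ∧ a ≤ 2 * m + 1 ∧
      ((.node e.1 a : DV V), (.node e.2 a : DV V)) ∈ Z'}) :
    -- for every red arc `(u,v)` there is no path from `v` to `u` in `G − Z` …
    (∀ p ∈ R, ¬ dReach (E \ Z) p.2 p.1) ∧
    -- … equivalently, `G − Z` has no closed directed walk containing a red arc.
    ¬ ∃ l : List V, IsDWalk (E \ Z) l ∧ l.head? = l.getLast? ∧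
      ∃ a b : V, (a, b) ∈ R ∧ ∃ l1 l2 : List V, l = l1 ++ a :: b :: l2 := by
  -- the key claim
  have key : ∀ p ∈ R, ¬ dReach (E \ Z) p.2 p.1 := by
    rintro ⟨u, v⟩ hpR hreach
    have hZmem : ∀ e : V × V, e ∈ E \ R → (∃ a : ℕ, 1 ≤ a ∧ a ≤ 2 * m + 1 ∧
        ((.node e.1 a : DV V), (.node e.2 a : DV V)) ∈ Z') → e ∈ Z := by
      intro e h1 h2; rw [hZdef]; exact ⟨h1, h2⟩
    rcases split_at_x E Z m x hreach with havoid | ⟨i, hi1, hi2, hv, hu⟩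
    · exact hX (u, v) hpR (Relation.ReflTransGen.mono (fun a b (h : (a, b) ∈ E \ Z ∧ _ ∧ _) => (⟨h.1.1, h.2.1, h.2.2⟩ : (a, b) ∈ E ∧ _ ∧ _)) _ _ havoid)
    · apply hcut
      have hb1 : (1 : ℕ) ≤ 2 * i := by omega
      have hb2 : 2 * i ≤ 2 * m + 1 := by omega
      have hb3 : (1 : ℕ) ≤ 2 * i + 1 := by omega
      have hb4 : 2 * i + 1 ≤ 2 * m + 1 := by omega
      have notmem : ∀ p q : DV V,
          (∀ w1 w2 : V, ∀ a : ℕ, p = DV.node w1 a → q = DV.node w2 a → False) →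
          (p, q) ∉ Z' := by
        intro p q hpq hmem
        obtain ⟨e, _, a', _, _, heq⟩ := hZ'sub hmem
        rw [Prod.mk.injEq] at heq
        exact hpq e.1 e.2 a' heq.1 heq.2
      have step1 : (fun p q => DAdj E R x m p q ∧ (p, q) ∉ Z')
          DV.src (DV.node (x i) (2 * i)) :=
        ⟨DAdj.fromS hi1 hi2 hb1 hb2 le_rfl,
          notmem _ _ (by rintro w1 w2 a h1 _; cases h1)⟩
      have step2 := lift_reach E R m x Z' hZ'sub Z hZmem hu (2 * i) hb1 hb2
      have step3 : (fun p q => DAdj E R x m p q ∧ (p, q) ∉ Z')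
          (DV.node u (2 * i)) (DV.node v (2 * i + 1)) :=
        ⟨DAdj.red hpR hi1 hi2,
          notmem _ _ (by rintro w1 w2 a h1 h2; injection h1 with _ e1
                         injection h2 with _ e2; omega)⟩
      have step4 := lift_reach E R m x Z' hZ'sub Z hZmem hv (2 * i + 1) hb3 hb4
      have step5 : (fun p q => DAdj E R x m p q ∧ (p, q) ∉ Z')
          (DV.node (x i) (2 * i + 1)) DV.snk :=
        ⟨DAdj.toT hi1 hi2 hb3 hb4 (by omega),
          notmem _ _ (by rintro w1 w2 a _ h2; cases h2)⟩
      exact Relation.ReflTransGen.head step1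
        ((step2.trans (Relation.ReflTransGen.head step3 step4)).tail step5)
  refine ⟨key, ?_⟩
  rintro ⟨l, ⟨hne, hch⟩, hhl, a, b, hab, l1, l2, rfl⟩
  set L := l1 ++ a :: b :: l2 with hL
  have hLsplit : L = (l1 ++ [a]) ++ b :: l2 := by simp [hL]
  have hz : ∃ z, L.getLast? = some z := by
    cases hLz : L.getLast? with
    | none => exact absurd (List.getLast?_eq_none_iff.mp hLz) hne
    | some z => exact ⟨z, rfl⟩
  obtain ⟨z, hz⟩ := hz
  have hhead : L.head? = some z := hhl.trans hz
  have hreach1 : Relation.ReflTransGen (fun a b => (a, b) ∈ E \ Z) b z := by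
    refine chain'_reach (b :: l2) (hch.suffix ⟨l1 ++ [a], by simp [hL]⟩) b z rfl ?_
    obtain ⟨w, hw⟩ : ∃ w, (b :: l2).getLast? = some w :=
      ⟨_, List.getLast?_eq_getLast (by simp)⟩
    rw [hLsplit, List.getLast?_append, hw] at hz
    rw [hw]
    simpa using hz
  have hreach2 : Relation.ReflTransGen (fun a b => (a, b) ∈ E \ Z) z a := by
    refine chain'_reach (l1 ++ [a]) (hch.prefix ⟨b :: l2, by simp [hL]⟩) z a ?_ ?_
    · cases l1 with
      | nil => simpa [hL] using hhead
      | cons c t => simpa [hL] using hhead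
    · simp
  exact key (a, b) hab (hreach1.trans hreach2)
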